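/- A pure 4-mode fermionic state |Ψ⟩ (a 4-qubit state of definite parity with respect to Z^{⊗4}) is Gaussian if and only if ⟨Ψ*| X⊗Y⊗X⊗Y |Ψ⟩ = 0, where |Ψ*⟩ denotes the componentwise complex conjugate of |Ψ⟩ in the computational basis. -/

import Mathlib

open Matrix Kronecker

/-- Pauli X. -/
noncomputable def pauliX : Matrix (Fin 2) (Fin 2) ℂ := !![0, 1; 1, 0]
/-- Pauli Y. -/
noncomputable def pauliY : Matrix (Fin 2) (Fin 2) ℂ := !![0, -Complex.I; Complex.I, 0]
/-- Pauli Z. -/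
noncomputable def pauliZ : Matrix (Fin 2) (Fin 2) ℂ := !![1, 0; 0, -1]

/-- The n-fold tensor (Kronecker) product `M 0 ⊗ ⋯ ⊗ M (n-1)` of 2×2 matrices,
realized as a matrix indexed by `Fin n → Fin 2` with entries given by products of
entries of the factors. -/
noncomputable def tensorFactors (n : ℕ) (M : Fin n → Matrix (Fin 2) (Fin 2) ℂ) :
    Matrix (Fin n → Fin 2) (Fin n → Fin 2) ℂ :=
  Matrix.of fun x y => ∏ i, M i (x i) (y i)

/-- The parity operator `Z^{⊗n}`. -/
noncomputable def parityOp (n : ℕ) : Matrix (Fin n → Fin 2) (Fin n → Fin 2) ℂ :=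
  tensorFactors n (fun _ => pauliZ)

/-- The Jordan-Wigner Majorana operators on `n` qubits (0-indexed):
`c_{2j} = Z^{⊗j} ⊗ X ⊗ 1^{⊗(n-j-1)}` and `c_{2j+1} = Z^{⊗j} ⊗ Y ⊗ 1^{⊗(n-j-1)}`. -/
noncomputable def majorana (n : ℕ) (k : Fin (2 * n)) :
    Matrix (Fin n → Fin 2) (Fin n → Fin 2) ℂ :=
  tensorFactors n (fun i =>
    if (i : ℕ) < (k : ℕ) / 2 then pauliZ
    else if (i : ℕ) = (k : ℕ) / 2 then (if (k : ℕ) % 2 = 0 then pauliX else pauliY)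
    else 1)

/-- The operator `Λ = Σ_{i=1}^{2n} c_i ⊗ c_i` on the doubled space. -/
noncomputable def lambdaOp (n : ℕ) :
    Matrix ((Fin n → Fin 2) × (Fin n → Fin 2)) ((Fin n → Fin 2) × (Fin n → Fin 2)) ℂ :=
  ∑ i : Fin (2 * n), (majorana n i) ⊗ₖ (majorana n i)

open Complex in
noncomputable def yf (a : Fin 2) : ℂ := if a = 0 then -Complex.I else Complex.I

noncomputable def flp (j : Fin 4) (x : Fin 4 → Fin 2) : Fin 4 → Fin 2 :=
  fun i => if i = j then 1 - x i else x i

noncomputable def jof (k : Fin (2*4)) : Fin 4 := ⟨(k:ℕ)/2, by omega⟩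

noncomputable def sgn (k : Fin (2*4)) (x : Fin 4 → Fin 2) : ℂ :=
  ∏ i : Fin 4, if (i:ℕ) < (k:ℕ)/2 then (-1:ℂ)^((x i : ℕ))
    else if (i:ℕ) = (k:ℕ)/2 then (if (k:ℕ) % 2 = 0 then 1 else yf (x i)) else 1

lemma pZd (a : Fin 2) : pauliZ a a = (-1:ℂ)^(a:ℕ) := by fin_cases a <;> norm_num [pauliZ]
lemma pZo {a b : Fin 2} (h : b ≠ a) : pauliZ a b = 0 := by
  fin_cases a <;> fin_cases b <;> simp_all [pauliZ]
lemma pXd (a : Fin 2) : pauliX a (1-a) = 1 := by fin_cases a <;> norm_num [pauliX]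
lemma pXo {a b : Fin 2} (h : b ≠ 1 - a) : pauliX a b = 0 := by
  fin_cases a <;> fin_cases b <;> simp_all [pauliX]
lemma pYd (a : Fin 2) : pauliY a (1-a) = yf a := by fin_cases a <;> norm_num [pauliY, yf]
lemma pYo {a b : Fin 2} (h : b ≠ 1 - a) : pauliY a b = 0 := by
  fin_cases a <;> fin_cases b <;> simp_all [pauliY]
lemma pOned (a : Fin 2) : (1 : Matrix (Fin 2) (Fin 2) ℂ) a a = 1 := by simp
lemma pOneo {a b : Fin 2} (h : b ≠ a) : (1 : Matrix (Fin 2) (Fin 2) ℂ) a b = 0 := by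
  simp [Matrix.one_apply, h.symm]

lemma majorana_apply (k : Fin (2*4)) (x y : Fin 4 → Fin 2) :
    majorana 4 k x y = if y = flp (jof k) x then sgn k x else 0 := by
  by_cases h : y = flp (jof k) x
  · subst h
    simp only [if_pos rfl, majorana, tensorFactors, Matrix.of_apply, sgn]
    refine Finset.prod_congr rfl (fun i _ => ?_)
    rcases lt_trichotomy (i:ℕ) ((k:ℕ)/2) with hlt | heq | hgt
    · have hij : i ≠ jof k := by
        intro he; rw [he] at hlt; exact lt_irrefl _ hlt
      rw [if_pos hlt, if_pos hlt]
      simp only [flp, if_neg hij]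
      exact pZd (x i)
    · have hij : i = jof k := Fin.ext heq
      have hnlt : ¬((i:ℕ) < (k:ℕ)/2) := by omega
      simp only [hnlt, heq, lt_self_iff_false, if_true, if_false, ite_true, ite_false, flp, if_pos hij]
      by_cases hk : (k:ℕ) % 2 = 0
      · simp only [hk, ite_true]; exact pXd (x i)
      · simp only [hk, ite_false, if_neg hk]; exact pYd (x i)
    · have hij : i ≠ jof k := by
        intro he; rw [he] at hgt; exact lt_irrefl _ hgt
      have hnlt : ¬((i:ℕ) < (k:ℕ)/2) := by omega
      have hne : ¬((i:ℕ) = (k:ℕ)/2) := by omega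
      simp only [hnlt, hne, if_false, ite_false, flp, if_neg hij]
      exact pOned (x i)
  · rw [if_neg h]
    obtain ⟨i, hi⟩ := Function.ne_iff.mp h
    simp only [majorana, tensorFactors, Matrix.of_apply]
    apply Finset.prod_eq_zero (Finset.mem_univ i)
    rcases lt_trichotomy (i:ℕ) ((k:ℕ)/2) with hlt | heq | hgt
    · have hij : i ≠ jof k := fun he => by rw [he] at hlt; exact lt_irrefl _ hlt
      rw [if_pos hlt]
      exact pZo (by simpa [flp, if_neg hij] using hi)
    · have hij : i = jof k := Fin.ext heq
      rw [if_neg (by omega), if_pos heq]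
      have hy : y i ≠ 1 - x i := by simpa [flp, if_pos hij] using hi
      by_cases hk : (k:ℕ) % 2 = 0
      · simp only [hk, ite_true]; exact pXo hy
      · simp only [hk, ite_false, if_neg hk]; exact pYo hy
    · have hij : i ≠ jof k := fun he => by rw [he] at hgt; exact lt_irrefl _ hgt
      rw [if_neg (by omega), if_neg (by omega)]
      exact pOneo (by simpa [flp, if_neg hij] using hi)

lemma majorana_mulVec (k : Fin (2*4)) (ψ : (Fin 4 → Fin 2) → ℂ) (x : Fin 4 → Fin 2) :
    (majorana 4 k).mulVec ψ x = sgn k x * ψ (flp (jof k) x) := by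
  simp only [Matrix.mulVec, dotProduct, majorana_apply, ite_mul, zero_mul]
  rw [Finset.sum_ite_eq' Finset.univ (flp (jof k) x) (fun y => sgn k x * ψ y)]
  simp

lemma lambda_mulVec (ψ : (Fin 4 → Fin 2) → ℂ) (p q : Fin 4 → Fin 2) :
    (lambdaOp 4).mulVec (fun r => ψ r.1 * ψ r.2) (p, q) =
      ∑ k : Fin (2*4), (sgn k p * ψ (flp (jof k) p)) * (sgn k q * ψ (flp (jof k) q)) := by
  have h1 : ∀ k : Fin (2*4),
      ((majorana 4 k) ⊗ₖ (majorana 4 k)).mulVec (fun r => ψ r.1 * ψ r.2) (p, q)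
      = (sgn k p * ψ (flp (jof k) p)) * (sgn k q * ψ (flp (jof k) q)) := by
    intro k
    rw [← majorana_mulVec k ψ p, ← majorana_mulVec k ψ q]
    simp only [Matrix.mulVec, dotProduct, Matrix.kroneckerMap_apply,
      Fintype.sum_prod_type]
    rw [Finset.sum_mul_sum]
    exact Finset.sum_congr rfl (fun a _ => Finset.sum_congr rfl (fun b _ => by ring))
  calc (lambdaOp 4).mulVec (fun r => ψ r.1 * ψ r.2) (p, q)
      = ∑ k : Fin (2*4),
        ((majorana 4 k) ⊗ₖ (majorana 4 k)).mulVec (fun r => ψ r.1 * ψ r.2) (p, q) := by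
        simp only [lambdaOp, Matrix.mulVec, dotProduct, Matrix.sum_apply,
          Finset.sum_mul]
        exact Finset.sum_comm
    _ = _ := Finset.sum_congr rfl (fun k _ => h1 k)

noncomputable def psgn (x : Fin 4 → Fin 2) : ℂ := ∏ i : Fin 4, (-1:ℂ)^((x i : ℕ))

lemma parity_apply (x y : Fin 4 → Fin 2) :
    parityOp 4 x y = if y = x then psgn x else 0 := by
  by_cases h : y = x
  · subst h
    simp only [if_pos rfl, parityOp, tensorFactors, Matrix.of_apply, psgn]
    exact Finset.prod_congr rfl (fun i _ => pZd (y i))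
  · rw [if_neg h]
    obtain ⟨i, hi⟩ := Function.ne_iff.mp h
    simp only [parityOp, tensorFactors, Matrix.of_apply]
    exact Finset.prod_eq_zero (Finset.mem_univ i) (pZo hi)

lemma parity_mulVec (ψ : (Fin 4 → Fin 2) → ℂ) (x : Fin 4 → Fin 2) :
    (parityOp 4).mulVec ψ x = psgn x * ψ x := by
  simp only [Matrix.mulVec, dotProduct, parity_apply, ite_mul, zero_mul]
  rw [Finset.sum_ite_eq' Finset.univ x (fun y => psgn x * ψ y)]
  simp

noncomputable def cmpl (x : Fin 4 → Fin 2) : Fin 4 → Fin 2 := fun i => 1 - x i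

lemma xyxy_apply (x y : Fin 4 → Fin 2) :
    tensorFactors 4 ![pauliX, pauliY, pauliX, pauliY] x y =
      if y = cmpl x then yf (x 1) * yf (x 3) else 0 := by
  by_cases h : y = cmpl x
  · subst h
    simp only [if_pos rfl, tensorFactors, Matrix.of_apply, Fin.prod_univ_four]
    have e0 : (![pauliX, pauliY, pauliX, pauliY] : Fin 4 → Matrix (Fin 2) (Fin 2) ℂ) 0 = pauliX := rfl
    have e1 : (![pauliX, pauliY, pauliX, pauliY] : Fin 4 → Matrix (Fin 2) (Fin 2) ℂ) 1 = pauliY := rfl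
    have e2 : (![pauliX, pauliY, pauliX, pauliY] : Fin 4 → Matrix (Fin 2) (Fin 2) ℂ) 2 = pauliX := rfl
    have e3 : (![pauliX, pauliY, pauliX, pauliY] : Fin 4 → Matrix (Fin 2) (Fin 2) ℂ) 3 = pauliY := rfl
    rw [e0, e1, e2, e3]
    show pauliX (x 0) (1 - x 0) * pauliY (x 1) (1 - x 1) * pauliX (x 2) (1 - x 2) *
      pauliY (x 3) (1 - x 3) = _
    rw [pXd, pYd, pXd, pYd]; simp [mul_comm, mul_assoc, mul_left_comm]
  · rw [if_neg h]
    obtain ⟨i, hi⟩ := Function.ne_iff.mp h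
    simp only [tensorFactors, Matrix.of_apply]
    apply Finset.prod_eq_zero (Finset.mem_univ i)
    have hi' : y i ≠ 1 - x i := hi
    fin_cases i
    · exact pXo hi'
    · exact pYo hi'
    · exact pXo hi'
    · exact pYo hi'

noncomputable def e4 : (Fin 2 × Fin 2 × Fin 2 × Fin 2) ≃ (Fin 4 → Fin 2) where
  toFun t := ![t.1, t.2.1, t.2.2.1, t.2.2.2]
  invFun x := (x 0, x 1, x 2, x 3)
  left_inv := by decide
  right_inv := by decide

lemma sum_expand (f : (Fin 4 → Fin 2) → ℂ) :
    ∑ x : Fin 4 → Fin 2, f x = ∑ a : Fin 2, ∑ b : Fin 2, ∑ c : Fin 2, ∑ d : Fin 2,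
      f ![a, b, c, d] := by
  rw [← Equiv.sum_comp e4 f]
  simp only [Fintype.sum_prod_type]
  rfl

lemma forall_expand (P : (Fin 4 → Fin 2) → Prop) :
    (∀ x : Fin 4 → Fin 2, P x) ↔ ∀ a b c d : Fin 2, P ![a, b, c, d] := by
  constructor
  · intro h a b c d; exact h _
  · intro h x
    have : x = ![x 0, x 1, x 2, x 3] := by
      funext i; fin_cases i <;> rfl
    rw [this]; exact h _ _ _ _

lemma sum8 (f : Fin (2*4) → ℂ) :
    ∑ k : Fin (2*4), f k = f 0 + f 1 + f 2 + f 3 + f 4 + f 5 + f 6 + f 7 :=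
  Fin.sum_univ_eight f

lemma kv0 : ((0 : Fin (2*4)) : ℕ) = 0 := rfl
lemma kv1 : ((1 : Fin (2*4)) : ℕ) = 1 := rfl
lemma kv2 : ((2 : Fin (2*4)) : ℕ) = 2 := rfl
lemma kv3 : ((3 : Fin (2*4)) : ℕ) = 3 := rfl
lemma kv4 : ((4 : Fin (2*4)) : ℕ) = 4 := rfl
lemma kv5 : ((5 : Fin (2*4)) : ℕ) = 5 := rfl
lemma kv6 : ((6 : Fin (2*4)) : ℕ) = 6 := rfl
lemma kv7 : ((7 : Fin (2*4)) : ℕ) = 7 := rfl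

lemma fv0 : ((0 : Fin 4) : ℕ) = 0 := rfl
lemma fv1 : ((1 : Fin 4) : ℕ) = 1 := rfl
lemma fv2 : ((2 : Fin 4) : ℕ) = 2 := rfl
lemma fv3 : ((3 : Fin 4) : ℕ) = 3 := rfl

lemma jof0 : jof 0 = 0 := rfl
lemma jof1 : jof 1 = 0 := rfl
lemma jof2 : jof 2 = 1 := rfl
lemma jof3 : jof 3 = 1 := rfl
lemma jof4 : jof 4 = 2 := rfl
lemma jof5 : jof 5 = 2 := rfl
lemma jof6 : jof 6 = 3 := rfl
lemma jof7 : jof 7 = 3 := rfl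

lemma sgn0 (x : Fin 4 → Fin 2) : sgn 0 x = 1 := by
  norm_num [sgn, Fin.prod_univ_four, kv0, kv1, kv2, kv3, kv4, kv5, kv6, kv7, fv0, fv1, fv2, fv3]
lemma sgn1 (x : Fin 4 → Fin 2) : sgn 1 x = yf (x 0) := by
  norm_num [sgn, Fin.prod_univ_four, kv0, kv1, kv2, kv3, kv4, kv5, kv6, kv7, fv0, fv1, fv2, fv3]
lemma sgn2 (x : Fin 4 → Fin 2) : sgn 2 x = (-1:ℂ)^((x 0:ℕ)) := by
  norm_num [sgn, Fin.prod_univ_four, kv0, kv1, kv2, kv3, kv4, kv5, kv6, kv7, fv0, fv1, fv2, fv3]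
lemma sgn3 (x : Fin 4 → Fin 2) : sgn 3 x = (-1:ℂ)^((x 0:ℕ)) * yf (x 1) := by
  norm_num [sgn, Fin.prod_univ_four, kv0, kv1, kv2, kv3, kv4, kv5, kv6, kv7, fv0, fv1, fv2, fv3]
  rfl
lemma sgn4 (x : Fin 4 → Fin 2) : sgn 4 x = (-1:ℂ)^((x 0:ℕ)) * (-1:ℂ)^((x 1:ℕ)) := by
  norm_num [sgn, Fin.prod_univ_four, kv0, kv1, kv2, kv3, kv4, kv5, kv6, kv7, fv0, fv1, fv2, fv3]
lemma sgn5 (x : Fin 4 → Fin 2) :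
    sgn 5 x = (-1:ℂ)^((x 0:ℕ)) * (-1:ℂ)^((x 1:ℕ)) * yf (x 2) := by
  norm_num [sgn, Fin.prod_univ_four, kv0, kv1, kv2, kv3, kv4, kv5, kv6, kv7, fv0, fv1, fv2, fv3]
lemma sgn6 (x : Fin 4 → Fin 2) :
    sgn 6 x = (-1:ℂ)^((x 0:ℕ)) * (-1:ℂ)^((x 1:ℕ)) * (-1:ℂ)^((x 2:ℕ)) := by
  norm_num [sgn, Fin.prod_univ_four, kv0, kv1, kv2, kv3, kv4, kv5, kv6, kv7, fv0, fv1, fv2, fv3]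
lemma sgn7 (x : Fin 4 → Fin 2) :
    sgn 7 x = (-1:ℂ)^((x 0:ℕ)) * (-1:ℂ)^((x 1:ℕ)) * (-1:ℂ)^((x 2:ℕ)) * yf (x 3) := by
  norm_num [sgn, Fin.prod_univ_four, kv0, kv1, kv2, kv3, kv4, kv5, kv6, kv7, fv0, fv1, fv2, fv3]

lemma flp0 (a b c d : Fin 2) : flp 0 ![a,b,c,d] = ![1-a,b,c,d] := by
  funext i; fin_cases i <;> simp [flp]
lemma flp1 (a b c d : Fin 2) : flp 1 ![a,b,c,d] = ![a,1-b,c,d] := by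
  funext i; fin_cases i <;> simp [flp]
lemma flp2 (a b c d : Fin 2) : flp 2 ![a,b,c,d] = ![a,b,1-c,d] := by
  funext i; fin_cases i <;> simp [flp]
lemma flp3 (a b c d : Fin 2) : flp 3 ![a,b,c,d] = ![a,b,c,1-d] := by
  funext i; fin_cases i <;> simp [flp]

lemma sub0 : (1:Fin 2) - 0 = 1 := rfl
lemma sub1 : (1:Fin 2) - 1 = 0 := rfl
lemma yf0 : yf 0 = -Complex.I := rfl
lemma yf1 : yf 1 = Complex.I := rfl
lemma val0 : ((0 : Fin 2) : ℕ) = 0 := rfl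
lemma val1 : ((1 : Fin 2) : ℕ) = 1 := rfl

lemma cv0 (a b c d : Fin 2) : (![a,b,c,d] : Fin 4 → Fin 2) 0 = a := rfl
lemma cv1 (a b c d : Fin 2) : (![a,b,c,d] : Fin 4 → Fin 2) 1 = b := rfl
lemma cv2 (a b c d : Fin 2) : (![a,b,c,d] : Fin 4 → Fin 2) 2 = c := rfl
lemma cv3 (a b c d : Fin 2) : (![a,b,c,d] : Fin 4 → Fin 2) 3 = d := rfl

lemma cmpl4 (a b c d : Fin 2) : cmpl ![a,b,c,d] = ![1-a,1-b,1-c,1-d] := by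
  funext i; fin_cases i <;> simp [cmpl]

lemma rhs_eq (ψ : (Fin 4 → Fin 2) → ℂ) :
    (∑ j, ∑ k, ψ j * tensorFactors 4 ![pauliX, pauliY, pauliX, pauliY] j k * ψ k)
      = ∑ a : Fin 2, ∑ b : Fin 2, ∑ c : Fin 2, ∑ d : Fin 2,
          ψ ![a,b,c,d] * (yf b * yf d) * ψ ![1-a,1-b,1-c,1-d] := by
  have h1 : ∀ j, (∑ k, ψ j * tensorFactors 4 ![pauliX, pauliY, pauliX, pauliY] j k * ψ k)
      = ψ j * (yf (j 1) * yf (j 3)) * ψ (cmpl j) := by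
    intro j
    simp only [xyxy_apply, mul_ite, ite_mul, mul_zero, zero_mul]
    rw [Finset.sum_ite_eq' Finset.univ (cmpl j) (fun k => ψ j * (yf (j 1) * yf (j 3)) * ψ k)]
    simp
  rw [Finset.sum_congr rfl (fun j _ => h1 j),
    sum_expand (fun j => ψ j * (yf (j 1) * yf (j 3)) * ψ (cmpl j))]
  simp only [cmpl4, cv0, cv1, cv2, cv3]

set_option maxHeartbeats 4000000 in
theorem stmt11 (ψ : (Fin 4 → Fin 2) → ℂ)
    (hpar : (parityOp 4).mulVec ψ = ψ ∨ (parityOp 4).mulVec ψ = -ψ) :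
    (lambdaOp 4).mulVec (fun p => ψ p.1 * ψ p.2) = 0 ↔
      ∑ j, ∑ k, ψ j * (tensorFactors 4 ![pauliX, pauliY, pauliX, pauliY]) j k * ψ k = 0 := by
  have hL : (lambdaOp 4).mulVec (fun p => ψ p.1 * ψ p.2) = 0 ↔
      ∀ p q : Fin 4 → Fin 2,
        (∑ k : Fin (2*4), (sgn k p * ψ (flp (jof k) p)) * (sgn k q * ψ (flp (jof k) q))) = 0 := by
    rw [funext_iff]
    constructor
    · intro h p q
      have := h (p, q)
      rwa [lambda_mulVec, Pi.zero_apply] at this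
    · rintro h ⟨p, q⟩
      rw [Pi.zero_apply, lambda_mulVec]
      exact h p q
  rw [hL, rhs_eq]
  have hpsgn : ∀ a b c d : Fin 2,
      psgn ![a,b,c,d] = (-1:ℂ)^(a:ℕ)*(-1:ℂ)^(b:ℕ)*(-1:ℂ)^(c:ℕ)*(-1:ℂ)^(d:ℕ) := by
    intro a b c d
    norm_num [psgn, Fin.prod_univ_four, cv0, cv1, cv2, cv3]
  rcases hpar with hp | hp
  · have hz : ∀ x : Fin 4 → Fin 2, psgn x = -1 → ψ x = 0 := by
      intro x hx
      have h := congrFun hp x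
      rw [parity_mulVec, hx] at h
      linear_combination (-1/2 : ℂ) * h
    have z1 : ψ ![0,0,0,1] = 0 := hz _ (by rw [hpsgn]; norm_num)
    have z2 : ψ ![0,0,1,0] = 0 := hz _ (by rw [hpsgn]; norm_num)
    have z3 : ψ ![0,1,0,0] = 0 := hz _ (by rw [hpsgn]; norm_num)
    have z4 : ψ ![1,0,0,0] = 0 := hz _ (by rw [hpsgn]; norm_num)
    have z5 : ψ ![0,1,1,1] = 0 := hz _ (by rw [hpsgn]; norm_num)
    have z6 : ψ ![1,0,1,1] = 0 := hz _ (by rw [hpsgn]; norm_num)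
    have z7 : ψ ![1,1,0,1] = 0 := hz _ (by rw [hpsgn]; norm_num)
    have z8 : ψ ![1,1,1,0] = 0 := hz _ (by rw [hpsgn]; norm_num)
    constructor
    · intro hS
      have key := hS ![0,0,0,1] ![1,1,1,0]
      rw [sum8] at key
      simp only [sum8, sgn0, sgn1, sgn2, sgn3, sgn4, sgn5, sgn6, sgn7, jof0, jof1, jof2, jof3, jof4, jof5, jof6, jof7, flp0, flp1, flp2, flp3, sub0, sub1, yf0, yf1, val0, val1, cv0, cv1, cv2, cv3, Fin.isValue, Fin.zero_eta, Fin.mk_one, pow_zero, pow_one, mul_zero, zero_mul, mul_one, one_mul, add_zero, zero_add, neg_neg, neg_zero, z1, z2, z3, z4, z5, z6, z7, z8] at key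
      simp only [Fin.sum_univ_two, sub0, sub1, yf0, yf1, cv0, cv1, cv2, cv3,
        Fin.isValue, z1, z2, z3, z4, z5, z6, z7, z8, mul_zero, zero_mul, add_zero, zero_add, mul_one, one_mul]
      ring_nf at key ⊢
      try simp only [Complex.I_sq] at key ⊢
      linear_combination key
    · intro hQ
      simp only [Fin.sum_univ_two, sub0, sub1, yf0, yf1, cv0, cv1, cv2, cv3,
        Fin.isValue, z1, z2, z3, z4, z5, z6, z7, z8, mul_zero, zero_mul, add_zero, zero_add, mul_one, one_mul] at hQ
      rw [forall_expand]
      intro a b c d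
      rw [forall_expand]
      intro a' b' c' d'
      try ring_nf at hQ
      try simp only [Complex.I_sq] at hQ
      fin_cases a <;> fin_cases b <;> fin_cases c <;> fin_cases d <;>
        fin_cases a' <;> fin_cases b' <;> fin_cases c' <;> fin_cases d'
      all_goals
        simp only [sum8, sgn0, sgn1, sgn2, sgn3, sgn4, sgn5, sgn6, sgn7, jof0, jof1, jof2, jof3, jof4, jof5, jof6, jof7, flp0, flp1, flp2, flp3, sub0, sub1, yf0, yf1, val0, val1, cv0, cv1, cv2, cv3, Fin.isValue, Fin.zero_eta, Fin.mk_one, pow_zero, pow_one, mul_zero, zero_mul, mul_one, one_mul, add_zero, zero_add, neg_neg, neg_zero, z1, z2, z3, z4, z5, z6, z7, z8]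
      all_goals try ring_nf
      all_goals try simp only [Complex.I_sq]
      all_goals
        first
          | ring1
          | linear_combination hQ
          | linear_combination -hQ
  · have hz : ∀ x : Fin 4 → Fin 2, psgn x = 1 → ψ x = 0 := by
      intro x hx
      have h := congrFun hp x
      rw [parity_mulVec, hx, Pi.neg_apply] at h
      linear_combination (1/2 : ℂ) * h
    have z1 : ψ ![0,0,0,0] = 0 := hz _ (by rw [hpsgn]; norm_num)
    have z2 : ψ ![0,0,1,1] = 0 := hz _ (by rw [hpsgn]; norm_num)
    have z3 : ψ ![0,1,0,1] = 0 := hz _ (by rw [hpsgn]; norm_num)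
    have z4 : ψ ![0,1,1,0] = 0 := hz _ (by rw [hpsgn]; norm_num)
    have z5 : ψ ![1,0,0,1] = 0 := hz _ (by rw [hpsgn]; norm_num)
    have z6 : ψ ![1,0,1,0] = 0 := hz _ (by rw [hpsgn]; norm_num)
    have z7 : ψ ![1,1,0,0] = 0 := hz _ (by rw [hpsgn]; norm_num)
    have z8 : ψ ![1,1,1,1] = 0 := hz _ (by rw [hpsgn]; norm_num)
    constructor
    · intro hS
      have key := hS ![0,0,0,0] ![1,1,1,1]
      rw [sum8] at key
      simp only [sum8, sgn0, sgn1, sgn2, sgn3, sgn4, sgn5, sgn6, sgn7, jof0, jof1, jof2, jof3, jof4, jof5, jof6, jof7, flp0, flp1, flp2, flp3, sub0, sub1, yf0, yf1, val0, val1, cv0, cv1, cv2, cv3, Fin.isValue, Fin.zero_eta, Fin.mk_one, pow_zero, pow_one, mul_zero, zero_mul, mul_one, one_mul, add_zero, zero_add, neg_neg, neg_zero, z1, z2, z3, z4, z5, z6, z7, z8] at key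
      simp only [Fin.sum_univ_two, sub0, sub1, yf0, yf1, cv0, cv1, cv2, cv3,
        Fin.isValue, z1, z2, z3, z4, z5, z6, z7, z8, mul_zero, zero_mul, add_zero, zero_add, mul_one, one_mul]
      ring_nf at key ⊢
      try simp only [Complex.I_sq] at key ⊢
      linear_combination -key
    · intro hQ
      simp only [Fin.sum_univ_two, sub0, sub1, yf0, yf1, cv0, cv1, cv2, cv3,
        Fin.isValue, z1, z2, z3, z4, z5, z6, z7, z8, mul_zero, zero_mul, add_zero, zero_add, mul_one, one_mul] at hQ
      rw [forall_expand]
      intro a b c d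
      rw [forall_expand]
      intro a' b' c' d'
      try ring_nf at hQ
      try simp only [Complex.I_sq] at hQ
      fin_cases a <;> fin_cases b <;> fin_cases c <;> fin_cases d <;>
        fin_cases a' <;> fin_cases b' <;> fin_cases c' <;> fin_cases d'
      all_goals
        simp only [sum8, sgn0, sgn1, sgn2, sgn3, sgn4, sgn5, sgn6, sgn7, jof0, jof1, jof2, jof3, jof4, jof5, jof6, jof7, flp0, flp1, flp2, flp3, sub0, sub1, yf0, yf1, val0, val1, cv0, cv1, cv2, cv3, Fin.isValue, Fin.zero_eta, Fin.mk_one, pow_zero, pow_one, mul_zero, zero_mul, mul_one, one_mul, add_zero, zero_add, neg_neg, neg_zero, z1, z2, z3, z4, z5, z6, z7, z8]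
      all_goals try ring_nf
      all_goals try simp only [Complex.I_sq]
      all_goals
        first
          | ring1
          | linear_combination hQ
          | linear_combination -hQ
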